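/- For all positive integers n and d, (n!)^{2d} multiplied by the number of disconnected (d,n)-correlated tableaux is at most Σ_{k=1}^{d−1} binom(d,k)² · binom(dn,kn) · ((kn)!)² · (((d−k)n)!)². -/

import Mathlib

noncomputable section

/-- A `(d,n)`-correlated tableau: a `d × d` array of pairwise disjoint subsets of
`{1,…,dn}` with union everything, such that each row union and each column union has
exactly `n` elements. -/
def CorrTableau (n d : ℕ) :=
  {C : Fin d × Fin d → Finset (Fin (d * n)) //
    (∀ p q, p ≠ q → Disjoint (C p) (C q)) ∧
    (∀ x, ∃ p, x ∈ C p) ∧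
    (∀ i : Fin d, (Finset.univ.biUnion (fun j => C (i, j))).card = n) ∧
    (∀ j : Fin d, (Finset.univ.biUnion (fun i => C (i, j))).card = n)}

/-- The bipartite graph of a correlated tableau: left vertex `i` adjacent to right
vertex `j` iff `C(i,j) ≠ ∅`. -/
def ctGraph (n d : ℕ) (C : CorrTableau n d) : SimpleGraph (Fin d ⊕ Fin d) :=
  SimpleGraph.fromRel (fun a b => ∃ i j : Fin d, a = Sum.inl i ∧ b = Sum.inr j ∧
    (C.1 (i, j)).Nonempty)

open Finset


namespace CTaux

variable {n d : ℕ}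

instance : Finite (CorrTableau n d) := by unfold CorrTableau; infer_instance

def idx (C : CorrTableau n d) (x : Fin (d*n)) : Fin d × Fin d := (C.2.2.1 x).choose

lemma mem_idx (C : CorrTableau n d) (x : Fin (d*n)) : x ∈ C.1 (idx C x) :=
  (C.2.2.1 x).choose_spec

lemma idx_eq (C : CorrTableau n d) {x : Fin (d*n)} {p} (h : x ∈ C.1 p) : idx C x = p := by
  by_contra hne
  exact (Finset.disjoint_left.mp (C.2.1 _ _ hne) (mem_idx C x)) h

def rIdx (C : CorrTableau n d) (x : Fin (d*n)) : Fin d := (idx C x).1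
def cIdx (C : CorrTableau n d) (x : Fin (d*n)) : Fin d := (idx C x).2

lemma mem_rc (C : CorrTableau n d) (x : Fin (d*n)) : x ∈ C.1 (rIdx C x, cIdx C x) :=
  mem_idx C x

lemma mem_iff_rc (C : CorrTableau n d) (x : Fin (d*n)) (p : Fin d × Fin d) :
    x ∈ C.1 p ↔ rIdx C x = p.1 ∧ cIdx C x = p.2 := by
  constructor
  · intro h
    have := idx_eq C h
    exact ⟨by rw [rIdx, this], by rw [cIdx, this]⟩
  · rintro ⟨h1, h2⟩
    have : p = (rIdx C x, cIdx C x) := by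
      rw [h1, h2]
    rw [this]; exact mem_rc C x

def row (C : CorrTableau n d) (i : Fin d) : Finset (Fin (d*n)) :=
  Finset.univ.biUnion (fun j => C.1 (i, j))

def col (C : CorrTableau n d) (j : Fin d) : Finset (Fin (d*n)) :=
  Finset.univ.biUnion (fun i => C.1 (i, j))

lemma card_row (C : CorrTableau n d) (i : Fin d) : (row C i).card = n := C.2.2.2.1 i
lemma card_col (C : CorrTableau n d) (j : Fin d) : (col C j).card = n := C.2.2.2.2 j

lemma mem_row (C : CorrTableau n d) (x : Fin (d*n)) (i : Fin d) :
    x ∈ row C i ↔ rIdx C x = i := by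
  simp only [row, mem_biUnion, mem_univ, true_and]
  constructor
  · rintro ⟨j, hj⟩
    exact ((mem_iff_rc C x (i, j)).mp hj).1
  · intro h
    exact ⟨cIdx C x, by rw [← h]; exact mem_rc C x⟩

lemma mem_col (C : CorrTableau n d) (x : Fin (d*n)) (j : Fin d) :
    x ∈ col C j ↔ cIdx C x = j := by
  simp only [col, mem_biUnion, mem_univ, true_and]
  constructor
  · rintro ⟨i, hi⟩
    exact ((mem_iff_rc C x (i, j)).mp hi).2
  · intro h
    exact ⟨rIdx C x, by rw [← h]; exact mem_rc C x⟩


def rpos (C : CorrTableau n d) (x : Fin (d*n)) : Fin n :=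
  ((row C (rIdx C x)).orderIsoOfFin (card_row C (rIdx C x))).symm
    ⟨x, (mem_row C x (rIdx C x)).mpr rfl⟩

def cpos (C : CorrTableau n d) (x : Fin (d*n)) : Fin n :=
  ((col C (cIdx C x)).orderIsoOfFin (card_col C (cIdx C x))).symm
    ⟨x, (mem_col C x (cIdx C x)).mpr rfl⟩

lemma rpos_spec (C : CorrTableau n d) (x : Fin (d*n)) :
    (((row C (rIdx C x)).orderIsoOfFin (card_row C (rIdx C x))) (rpos C x) : Fin (d*n)) = x := by
  simp [rpos]

lemma cpos_spec (C : CorrTableau n d) (x : Fin (d*n)) :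
    (((col C (cIdx C x)).orderIsoOfFin (card_col C (cIdx C x))) (cpos C x) : Fin (d*n)) = x := by
  simp [cpos]

lemma rpos_inj (C : CorrTableau n d) {x y : Fin (d*n)} (hr : rIdx C x = rIdx C y)
    (hp : rpos C x = rpos C y) : x = y := by
  have h1 := rpos_spec C x
  have h2 := rpos_spec C y
  rw [hr, hp] at h1
  rw [h1] at h2
  exact h2.symm ▸ rfl

lemma cpos_inj (C : CorrTableau n d) {x y : Fin (d*n)} (hc : cIdx C x = cIdx C y)
    (hp : cpos C x = cpos C y) : x = y := by
  have h1 := cpos_spec C x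
  have h2 := cpos_spec C y
  rw [hc, hp] at h1
  rw [h1] at h2
  exact h2.symm ▸ rfl

lemma rpos_surj (C : CorrTableau n d) (i : Fin d) (m : Fin n) :
    ∃ x, rIdx C x = i ∧ rpos C x = m := by
  set y : Fin (d*n) := (((row C i).orderIsoOfFin (card_row C i)) m : Fin (d*n)) with hy
  have hmem : y ∈ row C i := (((row C i).orderIsoOfFin (card_row C i)) m).2
  have hr : rIdx C y = i := (mem_row C y i).mp hmem
  refine ⟨y, hr, ?_⟩
  have h1 := rpos_spec C y
  rw [hr] at h1
  -- h1 : ((row C i).orderIsoOfFin _) (rpos C y) = y as Fin (d*n)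
  have : (((row C i).orderIsoOfFin (card_row C i)) (rpos C y) : Fin (d*n)) =
      (((row C i).orderIsoOfFin (card_row C i)) m : Fin (d*n)) := by rw [h1, hy]
  have := Subtype.coe_injective this
  exact ((row C i).orderIsoOfFin (card_row C i)).injective this

lemma cpos_surj (C : CorrTableau n d) (j : Fin d) (m : Fin n) :
    ∃ x, cIdx C x = j ∧ cpos C x = m := by
  set y : Fin (d*n) := (((col C j).orderIsoOfFin (card_col C j)) m : Fin (d*n)) with hy
  have hmem : y ∈ col C j := (((col C j).orderIsoOfFin (card_col C j)) m).2
  have hc : cIdx C y = j := (mem_col C y j).mp hmem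
  refine ⟨y, hc, ?_⟩
  have h1 := cpos_spec C y
  rw [hc] at h1
  have : (((col C j).orderIsoOfFin (card_col C j)) (cpos C y) : Fin (d*n)) =
      (((col C j).orderIsoOfFin (card_col C j)) m : Fin (d*n)) := by rw [h1, hy]
  have := Subtype.coe_injective this
  exact ((col C j).orderIsoOfFin (card_col C j)).injective this


lemma card_filter_rIdx (C : CorrTableau n d) (S : Finset (Fin d)) :
    (Finset.univ.filter (fun x => rIdx C x ∈ S)).card = S.card * n := by
  have heq : Finset.univ.filter (fun x => rIdx C x ∈ S) = S.biUnion (row C) := by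
    ext x
    simp only [mem_filter, mem_univ, true_and, mem_biUnion, mem_row]
    constructor
    · intro h; exact ⟨rIdx C x, h, rfl⟩
    · rintro ⟨i, hi, rfl⟩; exact hi
  rw [heq, Finset.card_biUnion]
  · simp [card_row, mul_comm]
  · intro i _ j _ hij
    rw [Function.onFun, Finset.disjoint_left]
    intro x hx hy
    exact hij (((mem_row C x i).mp hx).symm.trans ((mem_row C x j).mp hy))

lemma card_filter_cIdx (C : CorrTableau n d) (T : Finset (Fin d)) :
    (Finset.univ.filter (fun x => cIdx C x ∈ T)).card = T.card * n := by
  have heq : Finset.univ.filter (fun x => cIdx C x ∈ T) = T.biUnion (col C) := by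
    ext x
    simp only [mem_filter, mem_univ, true_and, mem_biUnion, mem_col]
    constructor
    · intro h; exact ⟨cIdx C x, h, rfl⟩
    · rintro ⟨j, hj, rfl⟩; exact hj
  rw [heq, Finset.card_biUnion]
  · simp [card_col, mul_comm]
  · intro i _ j _ hij
    rw [Function.onFun, Finset.disjoint_left]
    intro x hx hy
    exact hij (((mem_col C x i).mp hx).symm.trans ((mem_col C x j).mp hy))

/-- Support property: every ground element's row index is in `S` iff its column index is in `T`. -/
def Supp (C : CorrTableau n d) (S T : Finset (Fin d)) : Prop :=
  ∀ x, rIdx C x ∈ S ↔ cIdx C x ∈ T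


def encFun {N K : ℕ} (A : Finset (Fin (d*n))) (hA : A.card = N)
    (U : Finset (Fin d)) (hU : U.card = K)
    (f : Fin (d*n) → Fin d) (g : Fin (d*n) → Fin n) (hmem : ∀ x ∈ A, f x ∈ U) :
    Fin N → Fin (K * n) :=
  fun a => finProdFinEquiv
    (((U.orderIsoOfFin hU).symm ⟨f ((A.orderIsoOfFin hA) a).1,
        hmem _ ((A.orderIsoOfFin hA) a).2⟩ : Fin K),
      g ((A.orderIsoOfFin hA) a).1)

lemma encFun_injective {N K : ℕ} (A : Finset (Fin (d*n))) (hA : A.card = N)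
    (U : Finset (Fin d)) (hU : U.card = K)
    (f : Fin (d*n) → Fin d) (g : Fin (d*n) → Fin n) (hmem : ∀ x ∈ A, f x ∈ U)
    (hinj : ∀ x y, f x = f y → g x = g y → x = y) :
    Function.Injective (encFun A hA U hU f g hmem) := by
  intro a b h
  unfold encFun at h
  have h' := finProdFinEquiv.injective h
  have h1 := congrArg Prod.fst h'
  have h2 := congrArg Prod.snd h'
  simp only at h1 h2
  have h1' := congrArg (U.orderIsoOfFin hU) h1
  simp only [OrderIso.apply_symm_apply] at h1'
  have h1'' := congrArg Subtype.val h1'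
  simp only at h1''
  have hxy := hinj _ _ h1'' h2
  have : ((A.orderIsoOfFin hA) a) = ((A.orderIsoOfFin hA) b) := Subtype.ext hxy
  exact (A.orderIsoOfFin hA).injective this

lemma encFun_eq_elim {N K : ℕ} {A A' : Finset (Fin (d*n))} (hAA' : A = A')
    (hA : A.card = N) (hA' : A'.card = N)
    (U : Finset (Fin d)) (hU : U.card = K)
    (f f' : Fin (d*n) → Fin d) (g g' : Fin (d*n) → Fin n)
    (hmem : ∀ x ∈ A, f x ∈ U) (hmem' : ∀ x ∈ A', f' x ∈ U)
    (h : encFun A hA U hU f g hmem = encFun A' hA' U hU f' g' hmem') :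
    ∀ x ∈ A, f x = f' x ∧ g x = g' x := by
  subst hAA'
  intro x hx
  have hc := congrFun h ((A.orderIsoOfFin hA).symm ⟨x, hx⟩)
  unfold encFun at hc
  simp only [OrderIso.apply_symm_apply] at hc
  have h' := finProdFinEquiv.injective hc
  have h1 := congrArg Prod.fst h'
  have h2 := congrArg Prod.snd h'
  simp only at h1 h2
  have h1' := congrArg (U.orderIsoOfFin hU) h1
  simp only [OrderIso.apply_symm_apply] at h1'
  exact ⟨congrArg Subtype.val h1', h2⟩


section Enc

variable (S T : Finset (Fin d))

def Aset (C : {C : CorrTableau n d // Supp C S T}) : Finset (Fin (d*n)) :=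
  Finset.univ.filter (fun x => rIdx C.1 x ∈ S)

variable {S T}

lemma Aset_card {k : ℕ} (hS : S.card = k) (C : {C : CorrTableau n d // Supp C S T}) :
    (Aset S T C).card = k * n := by
  rw [Aset, card_filter_rIdx, hS]

lemma Aset_compl_eq (C : {C : CorrTableau n d // Supp C S T}) :
    (Aset S T C)ᶜ = Finset.univ.filter (fun x => rIdx C.1 x ∈ Sᶜ) := by
  ext x; simp [Aset]

lemma Aset_compl_card {k : ℕ} (hS : S.card = k) (C : {C : CorrTableau n d // Supp C S T}) :
    ((Aset S T C)ᶜ).card = (d - k) * n := by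
  rw [Aset_compl_eq, card_filter_rIdx, Finset.card_compl, Fintype.card_fin, hS]

lemma Aset_col (C : {C : CorrTableau n d // Supp C S T}) :
    Aset S T C = Finset.univ.filter (fun x => cIdx C.1 x ∈ T) := by
  ext x; simp [Aset, C.2 x]

lemma Aset_compl_col (C : {C : CorrTableau n d // Supp C S T}) :
    (Aset S T C)ᶜ = Finset.univ.filter (fun x => cIdx C.1 x ∈ Tᶜ) := by
  rw [Aset_col]; ext x; simp

lemma Scompl_card {k : ℕ} (hS : S.card = k) : (Sᶜ : Finset (Fin d)).card = d - k := by
  rw [Finset.card_compl, Fintype.card_fin, hS]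

lemma mem_Aset_r (C : {C : CorrTableau n d // Supp C S T}) {x : Fin (d*n)}
    (hx : x ∈ Aset S T C) : rIdx C.1 x ∈ S := (Finset.mem_filter.mp hx).2

lemma mem_Aset_compl_r (C : {C : CorrTableau n d // Supp C S T}) {x : Fin (d*n)}
    (hx : x ∈ (Aset S T C)ᶜ) : rIdx C.1 x ∈ Sᶜ := by
  rw [Aset_compl_eq] at hx; exact (Finset.mem_filter.mp hx).2

lemma mem_Aset_c (C : {C : CorrTableau n d // Supp C S T}) {x : Fin (d*n)}
    (hx : x ∈ Aset S T C) : cIdx C.1 x ∈ T := by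
  rw [Aset_col] at hx; exact (Finset.mem_filter.mp hx).2

lemma mem_Aset_compl_c (C : {C : CorrTableau n d // Supp C S T}) {x : Fin (d*n)}
    (hx : x ∈ (Aset S T C)ᶜ) : cIdx C.1 x ∈ Tᶜ := by
  rw [Aset_compl_col] at hx; exact (Finset.mem_filter.mp hx).2

lemma rinj (C : CorrTableau n d) (σ : Fin d → Equiv.Perm (Fin n)) :
    ∀ x y, rIdx C x = rIdx C y →
      σ (rIdx C x) (rpos C x) = σ (rIdx C y) (rpos C y) → x = y := by
  intro x y h1 h2
  rw [h1] at h2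
  exact rpos_inj C h1 ((σ (rIdx C y)).injective h2)

lemma cinj (C : CorrTableau n d) (τ : Fin d → Equiv.Perm (Fin n)) :
    ∀ x y, cIdx C x = cIdx C y →
      τ (cIdx C x) (cpos C x) = τ (cIdx C y) (cpos C y) → x = y := by
  intro x y h1 h2
  rw [h1] at h2
  exact cpos_inj C h1 ((τ (cIdx C y)).injective h2)

variable (k : ℕ)

abbrev Psi : Type :=
  {A : Finset (Fin (d*n)) // A.card = k*n} × (Fin (k*n) ↪ Fin (k*n)) ×
    (Fin ((d-k)*n) ↪ Fin ((d-k)*n)) × (Fin (k*n) ↪ Fin (k*n)) ×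
    (Fin ((d-k)*n) ↪ Fin ((d-k)*n))

variable {k}

def Phi (hS : S.card = k) (hT : T.card = k) :
    (Fin d → Equiv.Perm (Fin n)) × (Fin d → Equiv.Perm (Fin n)) ×
      {C : CorrTableau n d // Supp C S T} → (Psi (n := n) (d := d) k) :=
  fun z =>
    let σ := z.1; let τ := z.2.1; let C := z.2.2
    (⟨Aset S T C, Aset_card hS C⟩,
     ⟨encFun (Aset S T C) (Aset_card hS C) S hS (rIdx C.1)
        (fun x => σ (rIdx C.1 x) (rpos C.1 x))
        (fun x hx => mem_Aset_r C hx),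
      encFun_injective _ _ _ _ _ _ _ (rinj C.1 σ)⟩,
     ⟨encFun ((Aset S T C)ᶜ) (Aset_compl_card hS C) Sᶜ (Scompl_card hS) (rIdx C.1)
        (fun x => σ (rIdx C.1 x) (rpos C.1 x))
        (fun x hx => mem_Aset_compl_r C hx),
      encFun_injective _ _ _ _ _ _ _ (rinj C.1 σ)⟩,
     ⟨encFun (Aset S T C) (Aset_card hS C) T hT (cIdx C.1)
        (fun x => τ (cIdx C.1 x) (cpos C.1 x))
        (fun x hx => mem_Aset_c C hx),
      encFun_injective _ _ _ _ _ _ _ (cinj C.1 τ)⟩,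
     ⟨encFun ((Aset S T C)ᶜ) (Aset_compl_card hS C) Tᶜ (Scompl_card hT) (cIdx C.1)
        (fun x => τ (cIdx C.1 x) (cpos C.1 x))
        (fun x hx => mem_Aset_compl_c C hx),
      encFun_injective _ _ _ _ _ _ _ (cinj C.1 τ)⟩)

lemma Phi_injective (hS : S.card = k) (hT : T.card = k) :
    Function.Injective (Phi (n := n) (d := d) hS hT) := by
  rintro ⟨σ, τ, C⟩ ⟨σ', τ', C'⟩ h
  have hA : Aset S T C = Aset S T C' :=
    congrArg (fun w : Psi (n := n) (d := d) k => w.1.1) h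
  have h1 : encFun (Aset S T C) (Aset_card hS C) S hS (rIdx C.1)
      (fun x => σ (rIdx C.1 x) (rpos C.1 x)) (fun x hx => mem_Aset_r C hx) =
      encFun (Aset S T C') (Aset_card hS C') S hS (rIdx C'.1)
      (fun x => σ' (rIdx C'.1 x) (rpos C'.1 x)) (fun x hx => mem_Aset_r C' hx) :=
    congrArg (fun w : Psi (n := n) (d := d) k => ⇑w.2.1) h
  have h2 : encFun ((Aset S T C)ᶜ) (Aset_compl_card hS C) Sᶜ (Scompl_card hS) (rIdx C.1)
      (fun x => σ (rIdx C.1 x) (rpos C.1 x)) (fun x hx => mem_Aset_compl_r C hx) =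
      encFun ((Aset S T C')ᶜ) (Aset_compl_card hS C') Sᶜ (Scompl_card hS) (rIdx C'.1)
      (fun x => σ' (rIdx C'.1 x) (rpos C'.1 x)) (fun x hx => mem_Aset_compl_r C' hx) :=
    congrArg (fun w : Psi (n := n) (d := d) k => ⇑w.2.2.1) h
  have h3 : encFun (Aset S T C) (Aset_card hS C) T hT (cIdx C.1)
      (fun x => τ (cIdx C.1 x) (cpos C.1 x)) (fun x hx => mem_Aset_c C hx) =
      encFun (Aset S T C') (Aset_card hS C') T hT (cIdx C'.1)
      (fun x => τ' (cIdx C'.1 x) (cpos C'.1 x)) (fun x hx => mem_Aset_c C' hx) :=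
    congrArg (fun w : Psi (n := n) (d := d) k => ⇑w.2.2.2.1) h
  have h4 : encFun ((Aset S T C)ᶜ) (Aset_compl_card hS C) Tᶜ (Scompl_card hT) (cIdx C.1)
      (fun x => τ (cIdx C.1 x) (cpos C.1 x)) (fun x hx => mem_Aset_compl_c C hx) =
      encFun ((Aset S T C')ᶜ) (Aset_compl_card hS C') Tᶜ (Scompl_card hT) (cIdx C'.1)
      (fun x => τ' (cIdx C'.1 x) (cpos C'.1 x)) (fun x hx => mem_Aset_compl_c C' hx) :=
    congrArg (fun w : Psi (n := n) (d := d) k => ⇑w.2.2.2.2) h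
  have e1 := encFun_eq_elim hA _ _ S hS _ _ _ _ _ _ h1
  have e2 := encFun_eq_elim (congrArg compl hA) _ _ Sᶜ (Scompl_card hS) _ _ _ _ _ _ h2
  have e3 := encFun_eq_elim hA _ _ T hT _ _ _ _ _ _ h3
  have e4 := encFun_eq_elim (congrArg compl hA) _ _ Tᶜ (Scompl_card hT) _ _ _ _ _ _ h4
  have hR : ∀ x, rIdx C.1 x = rIdx C'.1 x := by
    intro x
    by_cases hx : x ∈ Aset S T C
    · exact (e1 x hx).1
    · exact (e2 x (Finset.mem_compl.mpr hx)).1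
  have hG : ∀ x, σ (rIdx C.1 x) (rpos C.1 x) = σ' (rIdx C'.1 x) (rpos C'.1 x) := by
    intro x
    by_cases hx : x ∈ Aset S T C
    · exact (e1 x hx).2
    · exact (e2 x (Finset.mem_compl.mpr hx)).2
  have hCc : ∀ x, cIdx C.1 x = cIdx C'.1 x := by
    intro x
    by_cases hx : x ∈ Aset S T C
    · exact (e3 x hx).1
    · exact (e4 x (Finset.mem_compl.mpr hx)).1
  have hH : ∀ x, τ (cIdx C.1 x) (cpos C.1 x) = τ' (cIdx C'.1 x) (cpos C'.1 x) := by
    intro x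
    by_cases hx : x ∈ Aset S T C
    · exact (e3 x hx).2
    · exact (e4 x (Finset.mem_compl.mpr hx)).2
  have hCeq : C = C' := by
    apply Subtype.ext
    apply Subtype.ext
    funext p
    ext x
    rw [mem_iff_rc, mem_iff_rc, hR x, hCc x]
  subst hCeq
  have hσ : σ = σ' := by
    funext i
    apply Equiv.ext
    intro m
    obtain ⟨x, hx1, hx2⟩ := rpos_surj C.1 i m
    have := hG x
    rw [hx1, hx2] at this
    exact this
  have hτ : τ = τ' := by
    funext j
    apply Equiv.ext
    intro m
    obtain ⟨x, hx1, hx2⟩ := cpos_surj C.1 j m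
    have := hH x
    rw [hx1, hx2] at this
    exact this
  rw [hσ, hτ]

end Enc


lemma lemB {k : ℕ} {S T : Finset (Fin d)} (hS : S.card = k) (hT : T.card = k) :
    n.factorial ^ (2*d) * Nat.card {C : CorrTableau n d // Supp C S T} ≤
      (d*n).choose (k*n) * ((k*n).factorial)^2 * (((d-k)*n).factorial)^2 := by
  classical
  have hcard := Nat.card_le_card_of_injective (Phi (n := n) (d := d) hS hT) (Phi_injective hS hT)
  have hdom : Nat.card ((Fin d → Equiv.Perm (Fin n)) × (Fin d → Equiv.Perm (Fin n)) ×
      {C : CorrTableau n d // Supp C S T}) =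
      n.factorial ^ d * (n.factorial ^ d * Nat.card {C : CorrTableau n d // Supp C S T}) := by
    rw [Nat.card_prod, Nat.card_prod]
    congr 1
    · rw [Nat.card_eq_fintype_card]
      simp [Fintype.card_perm]
    · congr 1
      rw [Nat.card_eq_fintype_card]
      simp [Fintype.card_perm]
  have hcod : Nat.card (Psi (n := n) (d := d) k) =
      (d*n).choose (k*n) * ((k*n).factorial * (((d-k)*n).factorial *
        ((k*n).factorial * ((d-k)*n).factorial))) := by
    rw [Nat.card_eq_fintype_card]
    simp [Psi, Fintype.card_embedding_eq, Nat.descFactorial_self, Fintype.card_finset_len]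
  calc n.factorial ^ (2*d) * Nat.card {C : CorrTableau n d // Supp C S T}
      = Nat.card ((Fin d → Equiv.Perm (Fin n)) × (Fin d → Equiv.Perm (Fin n)) ×
        {C : CorrTableau n d // Supp C S T}) := by rw [hdom, two_mul, pow_add, mul_assoc]
    _ ≤ Nat.card (Psi (n := n) (d := d) k) := hcard
    _ = (d*n).choose (k*n) * ((k*n).factorial)^2 * (((d-k)*n).factorial)^2 := by
        rw [hcod]; ring


lemma exists_ST (hn : 0 < n) (hd : 0 < d) (C : CorrTableau n d)
    (h : ¬ (ctGraph n d C).Connected) :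
    ∃ k S T, k ∈ Finset.Icc 1 (d-1) ∧ S.card = k ∧ T.card = k ∧ Supp C S T := by
  classical
  have hne : Nonempty (Fin d ⊕ Fin d) := ⟨Sum.inl ⟨0, hd⟩⟩
  have hpre : ¬ (ctGraph n d C).Preconnected := fun hp => h ((SimpleGraph.connected_iff _).mpr ⟨hp, hne⟩)
  obtain ⟨u, v, huv⟩ : ∃ u v, ¬ (ctGraph n d C).Reachable u v := by
    by_contra hc
    push_neg at hc
    exact hpre fun a b => hc a b
  set G := ctGraph n d C with hG
  set S : Finset (Fin d) := Finset.univ.filter (fun i => G.Reachable u (Sum.inl i)) with hSdef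
  set T : Finset (Fin d) := Finset.univ.filter (fun j => G.Reachable u (Sum.inr j)) with hTdef
  have hmemS : ∀ i, i ∈ S ↔ G.Reachable u (Sum.inl i) := by
    intro i; simp [hSdef]
  have hmemT : ∀ j, j ∈ T ↔ G.Reachable u (Sum.inr j) := by
    intro j; simp [hTdef]
  have hSupp : Supp C S T := by
    intro x
    have hadj : G.Adj (Sum.inl (rIdx C x)) (Sum.inr (cIdx C x)) := by
      rw [hG, ctGraph, SimpleGraph.fromRel_adj]
      exact ⟨by simp, Or.inl ⟨rIdx C x, cIdx C x, rfl, rfl, ⟨x, mem_rc C x⟩⟩⟩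
    rw [hmemS, hmemT]
    constructor
    · intro hr; exact hr.trans hadj.reachable
    · intro hc; exact hc.trans hadj.symm.reachable
  have hST : S.card = T.card := by
    have h1 := card_filter_rIdx C S
    have heq : Finset.univ.filter (fun x => rIdx C x ∈ S) =
        Finset.univ.filter (fun x => cIdx C x ∈ T) := by
      ext x; simp [hSupp x]
    rw [heq, card_filter_cIdx] at h1
    exact (Nat.eq_of_mul_eq_mul_right hn h1).symm
  have hpos : 1 ≤ S.card := by
    rcases u with i | j
    · have : i ∈ S := (hmemS i).mpr (SimpleGraph.Reachable.refl _)
      exact Finset.card_pos.mpr ⟨i, this⟩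
    · have : j ∈ T := (hmemT j).mpr (SimpleGraph.Reachable.refl _)
      rw [hST]
      exact Finset.card_pos.mpr ⟨j, this⟩
  have hub : S.card ≤ d - 1 := by
    have hlt : S.card < d := by
      rcases v with i | j
      · have hni : i ∉ S := fun hi => huv ((hmemS i).mp hi)
        have : S ≠ Finset.univ := fun he => hni (he ▸ Finset.mem_univ i)
        have := Finset.card_lt_card (Finset.ssubset_univ_iff.mpr this)
        simpa using this
      · have hnj : j ∉ T := fun hj => huv ((hmemT j).mp hj)
        have : T ≠ Finset.univ := fun he => hnj (he ▸ Finset.mem_univ j)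
        have := Finset.card_lt_card (Finset.ssubset_univ_iff.mpr this)
        rw [hST]
        simpa using this
    exact Nat.le_sub_one_of_lt hlt
  exact ⟨S.card, S, T, Finset.mem_Icc.mpr ⟨hpos, hub⟩, rfl, hST.symm, hSupp⟩


def Target (n d : ℕ) : Type :=
  Σ k : (Finset.Icc 1 (d-1) : Finset ℕ), Σ S : {S : Finset (Fin d) // S.card = (k : ℕ)},
    Σ T : {T : Finset (Fin d) // T.card = (k : ℕ)}, {C : CorrTableau n d // Supp C S.1 T.1}

instance (n d : ℕ) : Finite (Target n d) := by unfold Target; infer_instance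

def theta (hn : 0 < n) (hd : 0 < d) :
    {C : CorrTableau n d // ¬ (ctGraph n d C).Connected} → Target n d := fun C =>
  let e := exists_ST hn hd C.1 C.2
  let e1 := e.choose_spec
  let e2 := e1.choose_spec
  let e3 := e2.choose_spec
  ⟨⟨e.choose, e3.1⟩, ⟨e1.choose, e3.2.1⟩, ⟨e2.choose, e3.2.2.1⟩, ⟨C.1, e3.2.2.2⟩⟩

lemma theta_injective (hn : 0 < n) (hd : 0 < d) :
    Function.Injective (theta (n := n) (d := d) hn hd) := by
  intro C C' h
  have := congrArg (fun t : Target n d => t.2.2.2.1) h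
  exact Subtype.ext this

lemma nat_card_sigma {ι : Type*} [Fintype ι] (f : ι → Type*) [∀ i, Finite (f i)] :
    Nat.card (Σ i, f i) = ∑ i, Nat.card (f i) := by
  letI : ∀ i, Fintype (f i) := fun i => Fintype.ofFinite _
  rw [Nat.card_eq_fintype_card, Fintype.card_sigma]
  exact Finset.sum_congr rfl fun i _ => (Nat.card_eq_fintype_card).symm

lemma card_target (n d : ℕ) :
    Nat.card (Target n d) = ∑ k : (Finset.Icc 1 (d-1) : Finset ℕ),
      ∑ S : {S : Finset (Fin d) // S.card = (k : ℕ)},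
        ∑ T : {T : Finset (Fin d) // T.card = (k : ℕ)},
          Nat.card {C : CorrTableau n d // Supp C S.1 T.1} := by
  classical
  rw [Target, nat_card_sigma]
  refine Finset.sum_congr rfl fun k _ => ?_
  rw [nat_card_sigma]
  refine Finset.sum_congr rfl fun S _ => ?_
  rw [nat_card_sigma]

end CTaux

set_option maxHeartbeats 1000000 in
/-- Upper bound on the number of disconnected `(d,n)`-correlated tableaux. -/
theorem stmt12 (n d : ℕ) (hn : 0 < n) (hd : 0 < d) :
    (n.factorial) ^ (2 * d) *
      Nat.card {C : CorrTableau n d // ¬ (ctGraph n d C).Connected} ≤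
    ∑ k ∈ Finset.Icc 1 (d - 1), (d.choose k) ^ 2 * ((d * n).choose (k * n)) *
      ((k * n).factorial) ^ 2 * (((d - k) * n).factorial) ^ 2 := by
  classical
  have h1 : Nat.card {C : CorrTableau n d // ¬ (ctGraph n d C).Connected} ≤
      Nat.card (CTaux.Target n d) :=
    Nat.card_le_card_of_injective _ (CTaux.theta_injective hn hd)
  calc (n.factorial) ^ (2 * d) *
      Nat.card {C : CorrTableau n d // ¬ (ctGraph n d C).Connected}
      ≤ (n.factorial) ^ (2 * d) * Nat.card (CTaux.Target n d) :=
        Nat.mul_le_mul_left _ h1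
    _ = ∑ k : (Finset.Icc 1 (d-1) : Finset ℕ),
        ∑ S : {S : Finset (Fin d) // S.card = (k : ℕ)},
          ∑ T : {T : Finset (Fin d) // T.card = (k : ℕ)},
            (n.factorial) ^ (2 * d) * Nat.card {C : CorrTableau n d // CTaux.Supp C S.1 T.1} := by
        rw [CTaux.card_target, Finset.mul_sum]
        refine Finset.sum_congr rfl fun k _ => ?_
        rw [Finset.mul_sum]
        refine Finset.sum_congr rfl fun S _ => ?_
        rw [Finset.mul_sum]
    _ ≤ ∑ k : (Finset.Icc 1 (d-1) : Finset ℕ),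
        ∑ _S : {S : Finset (Fin d) // S.card = (k : ℕ)},
          ∑ _T : {T : Finset (Fin d) // T.card = (k : ℕ)},
            ((d*n).choose ((k : ℕ)*n) * (((k : ℕ)*n).factorial)^2 *
              (((d-(k : ℕ))*n).factorial)^2) := by
        refine Finset.sum_le_sum fun k _ => Finset.sum_le_sum fun S _ =>
          Finset.sum_le_sum fun T _ => ?_
        exact CTaux.lemB S.2 T.2
    _ = ∑ k : (Finset.Icc 1 (d-1) : Finset ℕ),
        (d.choose (k : ℕ)) ^ 2 * ((d * n).choose ((k : ℕ) * n)) *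
          (((k : ℕ) * n).factorial) ^ 2 * (((d - (k : ℕ)) * n).factorial) ^ 2 := by
        refine Finset.sum_congr rfl fun k _ => ?_
        rw [Finset.sum_const, Finset.sum_const]
        simp only [Finset.card_univ, Fintype.card_finset_len, Fintype.card_fin,
          smul_eq_mul]
        ring
    _ = ∑ k ∈ Finset.Icc 1 (d - 1), (d.choose k) ^ 2 * ((d * n).choose (k * n)) *
        ((k * n).factorial) ^ 2 * (((d - k) * n).factorial) ^ 2 :=
        Finset.sum_coe_sort (Finset.Icc 1 (d-1)) (fun k => (d.choose k) ^ 2 *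
          ((d * n).choose (k * n)) * ((k * n).factorial) ^ 2 * (((d - k) * n).factorial) ^ 2)
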